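/- Let k be a field of characteristic 2, s = Σ_{i≥0}(t³+t⁴)^{2^i} ∈ k[[t]]. Then t/(1+t) + s/(1+t)² = t + t² + Σ_{j≥0} Σ_{ℓ=0}^{2^j - 1} t^{6·2^j + 2ℓ} in k[[t]]. -/

import Mathlib

open PowerSeries
noncomputable section

variable (k : Type*) [Field k]

/-- The power series `s = Σ_{i≥0} (t³+t⁴)^{2^i}` in `k[[t]]`, given coefficientwise
(the term of index `i` has `t`-adic order `3·2^i > n` for `i > n`). -/
def paperS : PowerSeries k :=
  PowerSeries.mk fun n =>
    ∑ i ∈ Finset.range (n + 1), PowerSeries.coeff (R := k) n ((X ^ 3 + X ^ 4) ^ 2 ^ i)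

/-- The `t`-adically convergent double sum `Σ_{j≥0} Σ_{ℓ=0}^{2^j-1} t^{6·2^j+2ℓ}`, given
coefficientwise (the terms with `j > n` do not contribute to the coefficient of `tⁿ`). -/
def phiTail : PowerSeries k :=
  PowerSeries.mk fun n =>
    ∑ j ∈ Finset.range (n + 1), ∑ l ∈ Finset.range (2 ^ j),
      if n = 6 * 2 ^ j + 2 * l then (1 : k) else 0

section Aux

variable [CharP k 2]

instance auxCharP : CharP (PowerSeries k) 2 :=
  charP_of_injective_algebraMap' k (A := PowerSeries k) 2

lemma aux_pow_expand (i : ℕ) :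
    ((X ^ 3 + X ^ 4 : PowerSeries k) ^ 2 ^ i) = X ^ (3 * 2 ^ i) + X ^ (4 * 2 ^ i) := by
  haveI := Fact.mk Nat.prime_two
  rw [add_pow_char_pow, ← pow_mul, ← pow_mul]

lemma aux_lt_pow {n i : ℕ} (h : n < i) : n < 2 ^ i :=
  lt_of_lt_of_le (Nat.lt_of_lt_of_le h (Nat.lt_two_pow_self (n := i)).le) le_rfl

lemma coeff_paperS (n : ℕ) :
    PowerSeries.coeff n (paperS k) =
      ∑ i ∈ Finset.range (n + 4),
        ((if n = 3 * 2 ^ i then (1 : k) else 0) + (if n = 4 * 2 ^ i then (1 : k) else 0)) := by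
  rw [paperS, coeff_mk]
  have hterm : ∀ i : ℕ, PowerSeries.coeff n ((X ^ 3 + X ^ 4 : PowerSeries k) ^ 2 ^ i) =
      (if n = 3 * 2 ^ i then (1 : k) else 0) + (if n = 4 * 2 ^ i then (1 : k) else 0) := by
    intro i
    rw [aux_pow_expand, map_add, coeff_X_pow, coeff_X_pow]
  rw [Finset.sum_congr rfl fun i _ => hterm i]
  apply Finset.sum_subset (Finset.range_subset_range.2 (by omega))
  intro i _ hi
  simp only [Finset.mem_range, not_lt] at hi
  have h2 : n < 2 ^ i := aux_lt_pow (by omega)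
  rw [if_neg (by omega), if_neg (by omega), add_zero]

lemma telescope (n a : ℕ) : ∀ N : ℕ,
    ((∑ l ∈ Finset.range N, if n = a + 2 * l then (1 : k) else 0) +
      ∑ l ∈ Finset.range N, if n = a + 2 * l + 2 then (1 : k) else 0) =
      (if n = a then (1 : k) else 0) + (if n = a + 2 * N then (1 : k) else 0) := by
  have htwo : (2 : k) = 0 := by
    have := CharP.cast_eq_zero k 2; exact_mod_cast this
  intro N
  induction N with
  | zero =>
    simp only [Finset.range_zero, Finset.sum_empty, Nat.mul_zero, add_zero, zero_add]
    linear_combination (-(if n = a then (1 : k) else 0)) * htwo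
  | succ N ih =>
    rw [Finset.sum_range_succ, Finset.sum_range_succ]
    have h1 : a + 2 * (N + 1) = a + 2 * N + 2 := by ring
    rw [h1]
    linear_combination ih + (if n = a + 2 * N then (1 : k) else 0) * htwo

lemma coeff_phiTail_mul (n : ℕ) :
    PowerSeries.coeff n (phiTail k * (1 + X ^ 2)) =
      ∑ j ∈ Finset.range (n + 3),
        ((if n = 6 * 2 ^ j then (1 : k) else 0) + (if n = 8 * 2 ^ j then (1 : k) else 0)) := by
  rw [mul_add, mul_one, map_add, coeff_mul_X_pow']
  rw [phiTail, coeff_mk]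
  by_cases hn : 2 ≤ n
  · rw [if_pos hn, coeff_mk]
    -- extend both sums to range (n+4)
    have hext : ∀ m : ℕ, m ≤ n →
        (∑ j ∈ Finset.range (m + 1), ∑ l ∈ Finset.range (2 ^ j),
          if m = 6 * 2 ^ j + 2 * l then (1 : k) else 0) =
        ∑ j ∈ Finset.range (n + 3), ∑ l ∈ Finset.range (2 ^ j),
          if m = 6 * 2 ^ j + 2 * l then (1 : k) else 0 := by
      intro m hm
      apply Finset.sum_subset (Finset.range_subset_range.2 (by omega))
      intro j _ hj
      simp only [Finset.mem_range, not_lt] at hj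
      have h2 : m < 2 ^ j := aux_lt_pow (by omega)
      apply Finset.sum_eq_zero
      intro l _
      rw [if_neg (by omega)]
    rw [hext n le_rfl, hext (n - 2) (by omega), ← Finset.sum_add_distrib]
    apply Finset.sum_congr rfl
    intro j _
    have hcond : ∀ l : ℕ, (if n - 2 = 6 * 2 ^ j + 2 * l then (1 : k) else 0) =
        (if n = 6 * 2 ^ j + 2 * l + 2 then (1 : k) else 0) := by
      intro l
      have : (n - 2 = 6 * 2 ^ j + 2 * l) ↔ (n = 6 * 2 ^ j + 2 * l + 2) := by omega
      simp only [this]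
    rw [Finset.sum_congr rfl fun l _ => hcond l, telescope]
    have : 6 * 2 ^ j + 2 * 2 ^ j = 8 * 2 ^ j := by ring
    rw [this]
  · rw [if_neg hn, add_zero]
    have hzero : ∀ (s : Finset ℕ),
        (∑ j ∈ s, ∑ l ∈ Finset.range (2 ^ j), if n = 6 * 2 ^ j + 2 * l then (1 : k) else 0) = 0 := by
      intro s
      apply Finset.sum_eq_zero; intro j _
      apply Finset.sum_eq_zero; intro l _
      have h2 : 1 ≤ 2 ^ j := Nat.one_le_two_pow
      rw [if_neg (by omega)]
    rw [hzero]
    symm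
    apply Finset.sum_eq_zero
    intro j _
    have h2 : 1 ≤ 2 ^ j := Nat.one_le_two_pow
    rw [if_neg (by omega), if_neg (by omega), add_zero]

lemma paperS_eq : paperS k = X ^ 3 + X ^ 4 + phiTail k * (1 + X ^ 2) := by
  ext n
  rw [coeff_paperS, map_add, map_add, coeff_X_pow, coeff_X_pow, coeff_phiTail_mul]
  rw [Finset.sum_range_succ']
  have h0 : (if n = 3 * 2 ^ 0 then (1 : k) else 0) + (if n = 4 * 2 ^ 0 then (1 : k) else 0) =
      (if n = 3 then (1 : k) else 0) + (if n = 4 then (1 : k) else 0) := by norm_num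
  rw [h0]
  have hsucc : ∀ i : ℕ,
      ((if n = 3 * 2 ^ (i + 1) then (1 : k) else 0) + (if n = 4 * 2 ^ (i + 1) then (1 : k) else 0)) =
      ((if n = 6 * 2 ^ i then (1 : k) else 0) + (if n = 8 * 2 ^ i then (1 : k) else 0)) := by
    intro i
    have h1 : 3 * 2 ^ (i + 1) = 6 * 2 ^ i := by ring
    have h2 : 4 * 2 ^ (i + 1) = 8 * 2 ^ i := by ring
    rw [h1, h2]
  rw [Finset.sum_congr rfl fun i _ => hsucc i]
  ring

end Aux

/-- for `k` of characteristic 2 and `s = Σ_{i≥0}(t³+t⁴)^{2^i}`,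
`t/(1+t) + s/(1+t)² = t + t² + Σ_{j≥0} Σ_{ℓ=0}^{2^j−1} t^{6·2^j+2ℓ}` in `k[[t]]`. -/
theorem sigma_t_formula [CharP k 2] :
    X * (1 + X : PowerSeries k)⁻¹ + paperS k * (((1 + X : PowerSeries k) ^ 2)⁻¹) =
      X + X ^ 2 + phiTail k := by
  haveI := Fact.mk Nat.prime_two
  set u : PowerSeries k := 1 + X with hu
  have hcu : constantCoeff u ≠ 0 := by
    simp [hu]
  have hcu2 : constantCoeff (u ^ 2) ≠ 0 := by
    rw [map_pow]
    exact pow_ne_zero 2 hcu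
  have hune : (u ^ 2 : PowerSeries k) ≠ 0 := fun h => hcu2 (by rw [h, map_zero])
  apply mul_right_cancel₀ hune
  have hfrob : (u ^ 2 : PowerSeries k) = 1 + X ^ 2 := by
    rw [hu, add_pow_char]
    norm_num
  calc (X * u⁻¹ + paperS k * (u ^ 2)⁻¹) * u ^ 2
      = X * (u⁻¹ * u) * u + paperS k * ((u ^ 2)⁻¹ * u ^ 2) := by ring
    _ = X * u + paperS k := by
        rw [PowerSeries.inv_mul_cancel u hcu, PowerSeries.inv_mul_cancel _ hcu2]
        ring
    _ = X + X ^ 2 + (X ^ 3 + X ^ 4 + phiTail k * (1 + X ^ 2)) := by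
        rw [paperS_eq]; rw [hu]; ring
    _ = (X + X ^ 2 + phiTail k) * u ^ 2 := by
        rw [hfrob]; ring
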